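/- Let q be a positive integer and let G be a bipartite graph with vertex bipartition A ⊎ B such that B has no isolated vertices. If |B| > m·q, where m is the size of a maximum matching in G, then there exist nonempty sets S ⊆ A and T ⊆ B such that (1) there exist q pairwise edge-disjoint matchings in G[S ∪ T], each saturating S, and (2) every neighbor of a vertex of T lies in S. -/

import Mathlib

open Finset in
private lemma matching_of_fun {V : Type} [Fintype V] [DecidableEq V]
    (G : SimpleGraph V) (C : Finset V) (f : V → V)
    (hadj : ∀ v ∈ C, G.Adj v (f v))
    (hinj : Set.InjOn f ↑C)
    (hside : ∀ v ∈ C, ∀ w ∈ C, f v ≠ w) :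
    ∃ M : G.Subgraph, M.IsMatching ∧ M.verts = ↑C ∪ f '' ↑C ∧
      (∀ v ∈ C, M.Adj v (f v)) ∧ M.edgeSet = (fun v => s(v, f v)) '' ↑C := by
  classical
  refine ⟨⟨↑C ∪ f '' ↑C, fun u v => (u ∈ C ∧ v = f u) ∨ (v ∈ C ∧ u = f v), ?_, ?_, ?_⟩,
    ?_, rfl, ?_, ?_⟩
  · rintro u v (⟨hu, rfl⟩ | ⟨hv, rfl⟩)
    · exact hadj u hu
    · exact (hadj v hv).symm
  · rintro u v (⟨hu, rfl⟩ | ⟨hv, rfl⟩)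
    · exact Or.inl (by simpa using hu)
    · exact Or.inr ⟨v, by simpa using hv, rfl⟩
  · constructor
    rintro u v (⟨hu, rfl⟩ | ⟨hv, rfl⟩)
    · exact Or.inr ⟨hu, rfl⟩
    · exact Or.inl ⟨hv, rfl⟩
  · rintro v (hv | ⟨u, hu, rfl⟩)
    · have hv : v ∈ C := by simpa using hv
      refine ⟨f v, Or.inl ⟨hv, rfl⟩, ?_⟩
      rintro w (⟨_, rfl⟩ | ⟨hw, rfl⟩)
      · rfl
      · exact absurd rfl (hside w hw (f w) hv)
    · have hu : u ∈ C := by simpa using hu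
      refine ⟨u, Or.inr ⟨hu, rfl⟩, ?_⟩
      rintro w (⟨hfu, rfl⟩ | ⟨hw, hfw⟩)
      · exact absurd rfl (hside u hu (f u) hfu)
      · exact hinj hw hu hfw.symm
  · intro v hv
    exact Or.inl ⟨hv, rfl⟩
  · ext e
    induction e using Sym2.ind with
    | _ u v =>
      simp only [SimpleGraph.Subgraph.mem_edgeSet, Set.mem_image]
      constructor
      · rintro (⟨hu, rfl⟩ | ⟨hv, rfl⟩)
        · exact ⟨u, by simpa using hu, rfl⟩
        · exact ⟨v, by simpa using hv, Sym2.eq_swap⟩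
      · rintro ⟨w, hw, he⟩
        have hw : w ∈ C := by simpa using hw
        rcases Sym2.eq_iff.mp he with ⟨rfl, rfl⟩ | ⟨rfl, rfl⟩
        · exact Or.inl ⟨hw, rfl⟩
        · exact Or.inr ⟨hw, rfl⟩

/-- The q-Expansion Lemma. -/
theorem expansion_lemma {V : Type} [Fintype V] [DecidableEq V]
    (G : SimpleGraph V) (A B : Set V) (q m : ℕ) (hq : 0 < q)
    (hpart : ∀ v : V, v ∈ A ∨ v ∈ B) (hdisj : Disjoint A B)
    (hbip : ∀ u v, G.Adj u v → (u ∈ A ∧ v ∈ B) ∨ (u ∈ B ∧ v ∈ A))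
    (hnoiso : ∀ b ∈ B, ∃ a, G.Adj b a)
    (hmax : ∃ M : G.Subgraph, M.IsMatching ∧ M.edgeSet.ncard = m)
    (hm : ∀ M : G.Subgraph, M.IsMatching → M.edgeSet.ncard ≤ m)
    (hB : m * q < B.ncard) :
    ∃ S T : Set V, S ⊆ A ∧ T ⊆ B ∧ S.Nonempty ∧ T.Nonempty ∧
      (∃ Ms : Fin q → G.Subgraph,
        (∀ i, (Ms i).IsMatching ∧ (Ms i).verts ⊆ S ∪ T ∧ S ⊆ (Ms i).support) ∧
        ∀ i j, i ≠ j → Disjoint (Ms i).edgeSet (Ms j).edgeSet) ∧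
      (∀ t ∈ T, ∀ u, G.Adj t u → u ∈ S) := by
  classical
  have hAB : ∀ {u v : V}, u ∈ B → G.Adj u v → v ∈ A := by
    intro u v hu ha
    rcases hbip u v ha with ⟨h1, _⟩ | ⟨_, h2⟩
    · exact absurd hu (Set.disjoint_left.mp hdisj h1)
    · exact h2
  set B' : Finset V := B.toFinset with hB'def
  have hBcard : B'.card = B.ncard := (Set.ncard_eq_toFinset_card' B).symm
  set nbr : Finset V → Finset V :=
    fun Z => Finset.univ.filter (fun a => ∃ z ∈ Z, G.Adj z a) with hnbr
  have mem_nbr : ∀ {Z : Finset V} {a : V}, a ∈ nbr Z ↔ ∃ z ∈ Z, G.Adj z a := by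
    intro Z a; simp [hnbr]
  have nbr_subA : ∀ Z ⊆ B', ∀ a ∈ nbr Z, a ∈ A := by
    intro Z hZ a ha
    rcases mem_nbr.mp ha with ⟨z, hz, hadj⟩
    exact hAB (by simpa [hB'def] using hZ hz) hadj
  -- any "injective adjacency assignment" out of a subset of B gives a matching, so is small
  have size_bound : ∀ (C : Finset V), ↑C ⊆ B → ∀ f : V → V,
      (∀ v ∈ C, G.Adj v (f v)) → Set.InjOn f ↑C → C.card ≤ m := by
    intro C hC f hadjf hinjf
    have hside : ∀ v ∈ C, ∀ w ∈ C, f v ≠ w := by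
      intro v hv w hw h
      have hfA : f v ∈ A := hAB (hC hv) (hadjf v hv)
      exact (Set.disjoint_left.mp hdisj hfA) (h ▸ hC hw)
    obtain ⟨M, hM, _, _, hedge⟩ := matching_of_fun G C f hadjf hinjf hside
    have hle := hm M hM
    have hinj2 : Set.InjOn (fun v => s(v, f v)) ↑C := by
      intro v hv w hw h
      rcases Sym2.eq_iff.mp h with ⟨h1, _⟩ | ⟨h1, _⟩
      · exact h1
      · exact absurd h1.symm (hside w hw v hv)
    have hcard : M.edgeSet.ncard = C.card := by
      rw [hedge, Set.ncard_image_of_injOn hinj2, Set.ncard_coe_finset]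
    omega
  -- Step 1: existence of a deficient set
  have step1 : ∃ Z : Finset V, Z ⊆ B' ∧ Z.Nonempty ∧ q * (nbr Z).card < Z.card := by
    by_contra hcon
    push_neg at hcon
    have hall : ∀ s : Finset {b // b ∈ B'},
        s.card ≤ (s.biUnion (fun b => (nbr {(b : V)}) ×ˢ (Finset.univ : Finset (Fin q)))).card := by
      intro s
      have himg : s.biUnion (fun b => (nbr {(b : V)}) ×ˢ (Finset.univ : Finset (Fin q)))
          = (nbr (s.image Subtype.val)) ×ˢ (Finset.univ : Finset (Fin q)) := by
        ext ⟨a, i⟩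
        simp only [Finset.mem_biUnion, Finset.mem_product, Finset.mem_univ, and_true,
          mem_nbr, Finset.mem_image, Finset.mem_singleton]
        constructor
        · rintro ⟨b, hb, z, rfl, hadj⟩
          exact ⟨↑b, ⟨b, hb, rfl⟩, hadj⟩
        · rintro ⟨z, ⟨b, hb, rfl⟩, hadj⟩
          exact ⟨b, hb, ↑b, rfl, hadj⟩
      rw [himg, Finset.card_product]
      have hZsub : s.image Subtype.val ⊆ B' := by
        intro v hv
        rcases Finset.mem_image.mp hv with ⟨b, _, rfl⟩
        exact b.2
      rcases s.eq_empty_or_nonempty with rfl | hs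
      · simp
      have hne : (s.image Subtype.val).Nonempty := hs.image _
      have h1 := hcon _ hZsub hne
      have h2 : s.card = (s.image Subtype.val).card :=
        (Finset.card_image_of_injective s Subtype.val_injective).symm
      simp only [Finset.card_univ, Fintype.card_fin]
      rw [mul_comm]
      omega
    obtain ⟨f, hfinj, hf⟩ := (Finset.all_card_le_biUnion_card_iff_exists_injective _).mp hall
    have hfadj : ∀ b : {b // b ∈ B'}, G.Adj ↑b (f b).1 := by
      intro b
      have := (Finset.mem_product.mp (hf b)).1
      rcases mem_nbr.mp this with ⟨z, hz, hadj⟩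
      rwa [Finset.mem_singleton.mp hz] at hadj
    have hsum : ∑ i : Fin q,
        (Finset.univ.filter (fun b : {b // b ∈ B'} => (f b).2 = i)).card
        = B'.card := by
      rw [← Finset.card_eq_sum_card_fiberwise (fun b _ => Finset.mem_univ ((f b).2))]
      simp [Finset.card_univ]
    have hex : ∃ i : Fin q,
        m < (Finset.univ.filter (fun b : {b // b ∈ B'} => (f b).2 = i)).card := by
      by_contra h
      push_neg at h
      have hle : ∑ i : Fin q,
          (Finset.univ.filter (fun b : {b // b ∈ B'} => (f b).2 = i)).card
          ≤ ∑ _i : Fin q, m := Finset.sum_le_sum (fun i _ => h i)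
      simp only [Finset.sum_const, Finset.card_univ, Fintype.card_fin, smul_eq_mul] at hle
      rw [hsum, hBcard] at hle
      have := mul_comm q m
      omega
    obtain ⟨i, hi⟩ := hex
    set D := Finset.univ.filter (fun b : {b // b ∈ B'} => (f b).2 = i) with hD
    set C := D.image Subtype.val with hCdef
    have hCcard : C.card = D.card := Finset.card_image_of_injective _ Subtype.val_injective
    have hCB : ↑C ⊆ B := by
      intro v hv
      rcases Finset.mem_image.mp hv with ⟨b, _, rfl⟩
      exact Set.mem_toFinset.mp b.2
    set fV : V → V := fun v => if h : v ∈ B' then (f ⟨v, h⟩).1 else v with hfV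
    have hadjC : ∀ v ∈ C, G.Adj v (fV v) := by
      intro v hv
      rcases Finset.mem_image.mp hv with ⟨b, _, rfl⟩
      simp only [hfV, dif_pos b.2]
      exact hfadj b
    have hinjC : Set.InjOn fV ↑C := by
      intro v hv w hw h
      rcases Finset.mem_image.mp (Finset.mem_coe.mp hv) with ⟨bv, hbv, rfl⟩
      rcases Finset.mem_image.mp (Finset.mem_coe.mp hw) with ⟨bw, hbw, rfl⟩
      simp only [hfV, dif_pos bv.2, dif_pos bw.2] at h
      have hbv2 : (f bv).2 = i := (Finset.mem_filter.mp hbv).2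
      have hbw2 : (f bw).2 = i := (Finset.mem_filter.mp hbw).2
      have : f ⟨↑bv, bv.2⟩ = f ⟨↑bw, bw.2⟩ := by
        apply Prod.ext
        · exact h
        · simpa [hbv2, hbw2] using (hbv2.trans hbw2.symm)
      have := hfinj this
      exact congrArg Subtype.val (by simpa using this)
    have := size_bound C hCB fV hadjC hinjC
    omega
  -- Step 2: pick a maximally deficient set
  obtain ⟨Z0, hZ0B, hZ0ne, hZ0def⟩ := step1
  set cand := B'.powerset.filter (fun Z => Z.Nonempty ∧ q * (nbr Z).card < Z.card) with hcand
  have hcand_ne : cand.Nonempty :=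
    ⟨Z0, by simp [hcand, Finset.mem_powerset, hZ0B, hZ0ne, hZ0def]⟩
  obtain ⟨Z, hZmem, hZmax⟩ :=
    Finset.exists_max_image cand (fun Z => (Z.card : ℤ) - q * (nbr Z).card) hcand_ne
  rw [hcand, Finset.mem_filter, Finset.mem_powerset] at hZmem
  obtain ⟨hZB, hZne, hZdef⟩ := hZmem
  set S := nbr Z with hSdef
  have hSA : ∀ a ∈ S, a ∈ A := fun a ha => nbr_subA Z hZB a ha
  have hZsetB : ∀ z ∈ Z, z ∈ B := fun z hz => by simpa [hB'def] using hZB hz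
  -- Step 3: Hall condition for S w.r.t. Z with multiplicity q
  have key : ∀ Y ⊆ S, q * Y.card ≤ (Z.filter (fun z => ∃ a ∈ Y, G.Adj z a)).card := by
    intro Y hYS
    by_contra hcon
    push_neg at hcon
    set W := Z.filter (fun z => ∃ a ∈ Y, G.Adj z a) with hW
    set Z' := Z \ W with hZ'
    have hWZ : W ⊆ Z := Finset.filter_subset _ _
    have hZ'card : Z'.card = Z.card - W.card := Finset.card_sdiff_of_subset hWZ
    have hnbrZ' : nbr Z' ⊆ S \ Y := by
      intro a ha
      rcases mem_nbr.mp ha with ⟨z, hz, hzadj⟩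
      have hzZ : z ∈ Z := (Finset.mem_sdiff.mp hz).1
      refine Finset.mem_sdiff.mpr ⟨mem_nbr.mpr ⟨z, hzZ, hzadj⟩, ?_⟩
      intro haY
      exact (Finset.mem_sdiff.mp hz).2 (Finset.mem_filter.mpr ⟨hzZ, a, haY, hzadj⟩)
    have hYle : Y.card ≤ S.card := Finset.card_le_card hYS
    have h1 : (nbr Z').card ≤ S.card - Y.card := by
      calc (nbr Z').card ≤ (S \ Y).card := Finset.card_le_card hnbrZ'
        _ = S.card - Y.card := Finset.card_sdiff_of_subset hYS
    have hWle : W.card ≤ Z.card := Finset.card_le_card hWZ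
    have e1 : (Z'.card : ℤ) = (Z.card : ℤ) - W.card := by
      rw [hZ'card]; push_cast [hWle]; ring
    have e2 : ((nbr Z').card : ℤ) ≤ (S.card : ℤ) - Y.card := by
      have := h1; omega
    have e3 : (W.card : ℤ) < (q : ℤ) * Y.card := by exact_mod_cast hcon
    have e4 : (q : ℤ) * (nbr Z').card ≤ (q : ℤ) * S.card - (q : ℤ) * Y.card := by
      have := mul_le_mul_of_nonneg_left e2 (by positivity : (0:ℤ) ≤ (q:ℤ))
      linarith [this, mul_sub (q:ℤ) (S.card : ℤ) (Y.card : ℤ)]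
    have e5 : (q : ℤ) * S.card < (Z.card : ℤ) := by exact_mod_cast hZdef
    have hd' : ((Z.card : ℤ) - (q : ℤ) * S.card) < (Z'.card : ℤ) - (q : ℤ) * (nbr Z').card := by
      linarith
    have hZ'pos : (0 : ℤ) < (Z'.card : ℤ) - (q : ℤ) * (nbr Z').card := by linarith
    have hZ'def2 : q * (nbr Z').card < Z'.card := by
      have : ((q : ℤ) * (nbr Z').card) < (Z'.card : ℤ) := by linarith
      exact_mod_cast this
    have hZ'B : Z' ⊆ B' := Finset.Subset.trans (Finset.sdiff_subset) hZB
    have hZ'ne : Z'.Nonempty := by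
      rw [← Finset.card_pos]
      omega
    have hle := hZmax Z' (by
      rw [hcand, Finset.mem_filter, Finset.mem_powerset]
      exact ⟨hZ'B, hZ'ne, hZ'def2⟩)
    linarith
  -- Step 4: apply Hall to get the q matchings
  have hall2 : ∀ s : Finset ({a // a ∈ S} × Fin q),
      s.card ≤ (s.biUnion (fun p => Z.filter (fun z => G.Adj z ↑p.1))).card := by
    intro s
    set Y := s.image (fun p => ((p.1 : V))) with hY
    have hYS : Y ⊆ S := by
      intro a ha
      rcases Finset.mem_image.mp ha with ⟨p, _, rfl⟩
      exact p.1.2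
    have hsub : s.biUnion (fun p => Z.filter (fun z => G.Adj z ↑p.1))
        = Z.filter (fun z => ∃ a ∈ Y, G.Adj z a) := by
      ext z
      simp only [Finset.mem_biUnion, Finset.mem_filter, hY, Finset.mem_image]
      constructor
      · rintro ⟨p, hp, hz, hadj⟩
        exact ⟨hz, ↑p.1, ⟨p, hp, rfl⟩, hadj⟩
      · rintro ⟨hz, a, ⟨p, hp, rfl⟩, hadj⟩
        exact ⟨p, hp, hz, hadj⟩
    have hscard : s.card ≤ Y.card * q := by
      have hinjp : Set.InjOn (fun p : {a // a ∈ S} × Fin q => ((p.1 : V), p.2)) ↑s := by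
        intro p _ p' _ h
        simp only [Prod.mk.injEq] at h
        exact Prod.ext_iff.mpr ⟨Subtype.ext h.1, h.2⟩
      have hmem : ∀ p ∈ s, (fun p : {a // a ∈ S} × Fin q => ((p.1 : V), p.2)) p
          ∈ Y ×ˢ (Finset.univ : Finset (Fin q)) := by
        intro p hp
        refine Finset.mem_product.mpr ⟨?_, Finset.mem_univ _⟩
        exact Finset.mem_image_of_mem _ hp
      have hle := Finset.card_le_card_of_injOn _ hmem hinjp
      calc s.card ≤ ((Y ×ˢ (Finset.univ : Finset (Fin q))).card) := hle
        _ = Y.card * q := by rw [Finset.card_product]; simp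
    calc s.card ≤ Y.card * q := hscard
      _ = q * Y.card := mul_comm _ _
      _ ≤ (Z.filter (fun z => ∃ a ∈ Y, G.Adj z a)).card := key Y hYS
      _ = (s.biUnion (fun p => Z.filter (fun z => G.Adj z ↑p.1))).card := by rw [hsub]
  obtain ⟨g, hginj, hg⟩ := (Finset.all_card_le_biUnion_card_iff_exists_injective _).mp hall2
  have hgZ : ∀ p, g p ∈ Z := fun p => (Finset.mem_filter.mp (hg p)).1
  have hgadj : ∀ p, G.Adj (g p) ↑p.1 := fun p => (Finset.mem_filter.mp (hg p)).2
  set fi : Fin q → V → V := fun i v => if h : v ∈ S then g (⟨v, h⟩, i) else v with hfi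
  have hfiZ : ∀ i, ∀ v ∈ S, fi i v ∈ Z := by
    intro i v hv
    simp only [hfi, dif_pos hv]
    exact hgZ _
  have hfad : ∀ i, ∀ v ∈ S, G.Adj v (fi i v) := by
    intro i v hv
    simp only [hfi, dif_pos hv]
    exact (hgadj (⟨v, hv⟩, i)).symm
  have hfinj : ∀ i, Set.InjOn (fi i) ↑S := by
    intro i v hv w hw h
    have hv' : v ∈ S := Finset.mem_coe.mp hv
    have hw' : w ∈ S := Finset.mem_coe.mp hw
    simp only [hfi, dif_pos hv', dif_pos hw'] at h
    have := hginj (show g (⟨v, hv'⟩, i) = g (⟨w, hw'⟩, i) from h)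
    exact congrArg Subtype.val (congrArg Prod.fst this)
  have hside : ∀ i, ∀ v ∈ S, ∀ w ∈ S, fi i v ≠ w := by
    intro i v hv w hw h
    have h1 : fi i v ∈ Z := hfiZ i v hv
    have hwB : w ∈ B := hZsetB _ (h ▸ h1)
    exact Set.disjoint_left.mp hdisj (hSA w hw) hwB
  choose M hM hMverts hMadj hMedge using fun i =>
    matching_of_fun G S (fi i) (hfad i) (hfinj i) (hside i)
  have hSne : (↑S : Set V).Nonempty := by
    obtain ⟨z, hz⟩ := hZne
    obtain ⟨a, hadj⟩ := hnoiso z (hZsetB z hz)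
    exact ⟨a, Finset.mem_coe.mpr (mem_nbr.mpr ⟨z, hz, hadj⟩)⟩
  have hTne : (↑Z : Set V).Nonempty := by
    obtain ⟨z, hz⟩ := hZne
    exact ⟨z, Finset.mem_coe.mpr hz⟩
  refine ⟨↑S, ↑Z, fun a ha => hSA a (Finset.mem_coe.mp ha),
    fun z hz => hZsetB z (Finset.mem_coe.mp hz), hSne, hTne, ⟨M, ?_, ?_⟩, ?_⟩
  · intro i
    refine ⟨hM i, ?_, ?_⟩
    · rw [hMverts i]
      apply Set.union_subset_union_right
      rintro v ⟨w, hw, rfl⟩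
      exact Finset.mem_coe.mpr (hfiZ i w (Finset.mem_coe.mp hw))
    · intro a ha
      exact (SimpleGraph.Subgraph.mem_support _).mpr
        ⟨fi i a, hMadj i a (Finset.mem_coe.mp ha)⟩
  · intro i j hij
    rw [Set.disjoint_left]
    intro e hei hej
    rw [hMedge i] at hei
    rw [hMedge j] at hej
    obtain ⟨v, hv, rfl⟩ := hei
    obtain ⟨w, hw, he⟩ := hej
    have hv' : v ∈ S := Finset.mem_coe.mp hv
    have hw' : w ∈ S := Finset.mem_coe.mp hw
    rcases Sym2.eq_iff.mp he with ⟨rfl, h2⟩ | ⟨h1, h2⟩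
    · simp only [hfi, dif_pos hw'] at h2
      have := hginj (show g (⟨w, hw'⟩, j) = g (⟨w, hw'⟩, i) from h2)
      exact hij (congrArg Prod.snd this).symm
    · exact hside i v hv' w hw' h1.symm
  · intro t ht u hadj
    exact Finset.mem_coe.mpr (mem_nbr.mpr ⟨t, Finset.mem_coe.mp ht, hadj⟩)
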